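/- A body whose boundary consists of 42 congruent Double Parabola cavities, each of individual normalized resistance 1.49650, inscribed in a circle, has total normalized resistance (sin(π/42)/(π/42))·1.49650 ≈ 1.4951, and this value exceeds 1.49. -/

import Mathlib

open Real

/-- A body bounded by 42 Double Parabola cavities, each of normalized resistance
1.49650, has total normalized resistance (sin(π/42)/(π/42))·1.49650, which
exceeds 1.49 (and is below 1.4965). -/
theorem body_resistance_42_cavities :
    let R : ℝ := (Real.sin (π/42) / (π/42)) * 1.49650
    1.49 < R ∧ R < 1.4965 := by
  intro R
  have hπl : (3.14 : ℝ) < π := by linarith [Real.pi_gt_d6]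
  have hπu : π < 3.15 := Real.pi_lt_d2
  set x : ℝ := π / 42 with hx
  have hx0 : 0 < x := by rw [hx]; positivity
  have hxu : x < 0.075 := by rw [hx]; linarith
  have hx1 : x ≤ 1 := by linarith
  have hs : x - x ^ 3 / 4 < Real.sin x := by have := Real.sin_gt_sub_cube hx0; linarith [pow_pos hx0 3]
  have hs' : Real.sin x < x := Real.sin_lt hx0
  have hd1 : Real.sin x / x < 1 := by
    rw [div_lt_one hx0]; exact hs'
  have hd2 : (1 : ℝ) - x ^ 2 / 4 < Real.sin x / x := by
    rw [lt_div_iff₀ hx0]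
    nlinarith
  constructor
  · show (1.49 : ℝ) < Real.sin x / x * 1.49650
    nlinarith [sq_nonneg x]
  · show Real.sin x / x * 1.49650 < 1.4965
    nlinarith
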